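/- arXiv:1309.7117 — 2 statements merged into one kernel-verified Lean document; each statement's English description precedes it below -/
import Mathlib

section
/- Let π = π₁…πₙ be a permutation with π₁ = i, and let π′ = red(π₂…πₙ) be the reduction of the remaining word. Then the number of occurrences of the pattern 1324 in π equals the number of occurrences of 1324 in π′ plus the number of occurrences (a,b,c) of the pattern 213 in π₂…πₙ whose '1'-entry (the smallest value in the occurrence) exceeds i. -/
/-- Number of occurrences of the pattern 1324 in `f`. -/
def occ1324 {m : ℕ} (f : Fin m → Fin m) : ℕ :=
  (Finset.univ.filter (fun q : Fin m × Fin m × Fin m × Fin m =>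
    q.1 < q.2.1 ∧ q.2.1 < q.2.2.1 ∧ q.2.2.1 < q.2.2.2 ∧
    f q.1 < f q.2.2.1 ∧ f q.2.2.1 < f q.2.1 ∧ f q.2.1 < f q.2.2.2)).card

/-- If π' is the reduction of π₂…πₙ (characterized by being order-isomorphic to that word),
then N₁₃₂₄(π) = N₁₃₂₄(π') + #{occurrences (p,q,r) of 213 in π₂…πₙ with '1'-entry > π₁}. -/
theorem stmt2 (n : ℕ) (π : Equiv.Perm (Fin (n + 1))) (π' : Equiv.Perm (Fin n))
    (hred : ∀ j k : Fin n, π' j < π' k ↔ π j.succ < π k.succ) :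
    occ1324 ⇑π = occ1324 ⇑π' +
      (Finset.univ.filter (fun q : Fin (n + 1) × Fin (n + 1) × Fin (n + 1) =>
        0 < q.1 ∧ q.1 < q.2.1 ∧ q.2.1 < q.2.2 ∧
        π q.2.1 < π q.1 ∧ π q.1 < π q.2.2 ∧ π 0 < π q.2.1)).card := by
  classical
  set S : Finset (Fin (n+1) × Fin (n+1) × Fin (n+1) × Fin (n+1)) :=
    Finset.univ.filter (fun q =>
      q.1 < q.2.1 ∧ q.2.1 < q.2.2.1 ∧ q.2.2.1 < q.2.2.2 ∧
      π q.1 < π q.2.2.1 ∧ π q.2.2.1 < π q.2.1 ∧ π q.2.1 < π q.2.2.2) with hS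
  have hsplit := Finset.card_filter_add_card_filter_not
    (s := S) (p := fun q => q.1 = (0 : Fin (n+1)))
  have hA : (S.filter (fun q => q.1 = (0 : Fin (n+1)))).card =
      (Finset.univ.filter (fun q : Fin (n + 1) × Fin (n + 1) × Fin (n + 1) =>
        0 < q.1 ∧ q.1 < q.2.1 ∧ q.2.1 < q.2.2 ∧
        π q.2.1 < π q.1 ∧ π q.1 < π q.2.2 ∧ π 0 < π q.2.1)).card := by
    apply Finset.card_nbij' (i := fun q => q.2) (j := fun t => (0, t))
    · intro q hq
      simp only [Finset.mem_coe, hS, Finset.mem_filter, Finset.mem_univ, true_and] at hq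
      obtain ⟨⟨h1, h2, h3, h4, h5, h6⟩, h0⟩ := hq
      rw [h0] at h1 h4
      simp only [Finset.mem_coe, Finset.mem_filter, Finset.mem_univ, true_and]
      exact ⟨h1, h2, h3, h5, h6, h4⟩
    · intro t ht
      simp only [Finset.mem_coe, Finset.mem_filter, Finset.mem_univ, true_and] at ht
      obtain ⟨h0, h1, h2, h3, h4, h5⟩ := ht
      refine Finset.mem_filter.mpr ⟨?_, rfl⟩
      simp only [hS, Finset.mem_filter, Finset.mem_univ, true_and]
      exact ⟨h0, h1, h2, h5, h3, h4⟩
    · intro q hq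
      simp only [Finset.mem_coe, hS, Finset.mem_filter] at hq
      exact Prod.ext hq.2.symm rfl
    · intro t _
      rfl
  have hB : (S.filter (fun q => ¬ q.1 = (0 : Fin (n+1)))).card = occ1324 ⇑π' := by
    rw [occ1324]
    have hmem : ∀ q : Fin (n+1) × Fin (n+1) × Fin (n+1) × Fin (n+1),
        q ∈ S.filter (fun q => ¬ q.1 = (0 : Fin (n+1))) →
        q.1 ≠ 0 ∧ q.2.1 ≠ 0 ∧ q.2.2.1 ≠ 0 ∧ q.2.2.2 ≠ 0 := by
      intro q hq
      simp only [hS, Finset.mem_filter, Finset.mem_univ, true_and] at hq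
      obtain ⟨⟨h1, h2, h3, -⟩, h0⟩ := hq
      have p1 := Fin.pos_of_ne_zero h0
      exact ⟨h0, Fin.pos_iff_ne_zero.mp (p1.trans h1),
        Fin.pos_iff_ne_zero.mp ((p1.trans h1).trans h2),
        Fin.pos_iff_ne_zero.mp (((p1.trans h1).trans h2).trans h3)⟩
    refine Finset.card_bij'
      (i := fun q hq => (q.1.pred (hmem q hq).1, q.2.1.pred (hmem q hq).2.1,
        q.2.2.1.pred (hmem q hq).2.2.1, q.2.2.2.pred (hmem q hq).2.2.2))
      (j := fun t _ => (t.1.succ, t.2.1.succ, t.2.2.1.succ, t.2.2.2.succ))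
      ?_ ?_ ?_ ?_
    · intro q hq
      have hq' := hq
      simp only [hS, Finset.mem_filter, Finset.mem_univ, true_and] at hq'
      obtain ⟨⟨h1, h2, h3, h4, h5, h6⟩, h0⟩ := hq'
      simp only [Finset.mem_filter, Finset.mem_univ, true_and]
      refine ⟨?_, ?_, ?_, ?_, ?_, ?_⟩ <;>
        first
          | (rw [Fin.pred_lt_pred_iff]; assumption)
          | (rw [hred, Fin.succ_pred, Fin.succ_pred]; assumption)
    · intro t ht
      simp only [Finset.mem_filter, Finset.mem_univ, true_and] at ht
      obtain ⟨h1, h2, h3, h4, h5, h6⟩ := ht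
      refine Finset.mem_filter.mpr ⟨?_, Fin.succ_ne_zero _⟩
      simp only [hS, Finset.mem_filter, Finset.mem_univ, true_and]
      refine ⟨?_, ?_, ?_, ?_, ?_, ?_⟩ <;>
        first
          | (exact Fin.succ_lt_succ_iff.mpr (by assumption))
          | (exact (hred _ _).mp (by assumption))
    · intro q hq
      simp only [Fin.succ_pred]
    · intro t ht
      simp only [Fin.pred_succ]
  rw [occ1324, ← hS, ← hsplit, hA, hB, Nat.add_comm]
end

section
/- For every n ≥ 1, the number of permutations of {1,…,n} avoiding the pattern 132 equals the n-th Catalan number C_n = (1/(n+1))·binomial(2n, n). -/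
open List Finset

/-- Pattern test: is a 3-element list a 132 pattern? -/
def isPat : List ℕ → Bool
  | [x, y, z] => x < z && z < y
  | _ => false

/-- A list of naturals avoids the pattern 132. -/
def Avoids (l : List ℕ) : Prop := ∀ p ∈ l.sublists, isPat p = false

instance : DecidablePred Avoids := fun _ => List.decidableBAll _ _

lemma avoids_iff (l : List ℕ) :
    Avoids l ↔ ∀ x y z : ℕ, [x, y, z] <+ l → ¬(x < z ∧ z < y) := by
  constructor
  · intro h x y z hs hp
    have := h _ (List.mem_sublists.2 hs)
    simp [isPat, hp.1, hp.2] at this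
  · intro h p hp
    rw [List.mem_sublists] at hp
    match p, hp with
    | [], _ => rfl
    | [x], _ => rfl
    | [x, y], _ => rfl
    | [x, y, z], hp =>
      simp only [isPat, Bool.and_eq_false_iff, decide_eq_false_iff_not, not_lt]
      by_contra hc
      push_neg at hc
      exact h x y z hp ⟨hc.1, hc.2⟩
    | x :: y :: z :: w :: r, hp =>
      exact rfl

lemma Avoids.sublist {l l' : List ℕ} (h : Avoids l) (hs : l' <+ l) : Avoids l' := by
  rw [avoids_iff] at h ⊢
  exact fun x y z hxyz => h x y z (hxyz.trans hs)

lemma takeWhile_ne_append {m : ℕ} (l₁ l₂ : List ℕ) (h : m ∉ l₁) :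
    (l₁ ++ m :: l₂).takeWhile (· ≠ m) = l₁ := by
  induction l₁ with
  | nil => simp
  | cons a t ih =>
    simp only [List.mem_cons, not_or] at h
    have ha : a ≠ m := fun he => h.1 he.symm
    rw [List.cons_append, List.takeWhile_cons_of_pos (by simpa using ha), ih h.2]

lemma dropWhile_ne_append {m : ℕ} (l₁ l₂ : List ℕ) (h : m ∉ l₁) :
    (l₁ ++ m :: l₂).dropWhile (· ≠ m) = m :: l₂ := by
  induction l₁ with
  | nil => simp
  | cons a t ih =>
    simp only [List.mem_cons, not_or] at h
    have ha : a ≠ m := fun he => h.1 he.symm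
    rw [List.cons_append, List.dropWhile_cons_of_pos (by simpa using ha), ih h.2]

lemma split_at_mem {m : ℕ} (l : List ℕ) (h : m ∈ l) :
    l.takeWhile (· ≠ m) ++ m :: (l.dropWhile (· ≠ m)).tail = l := by
  induction l with
  | nil => simp at h
  | cons a t ih =>
    by_cases ha : a = m
    · subst ha
      rw [List.takeWhile_cons_of_neg (by simp), List.dropWhile_cons_of_neg (by simp)]
      simp
    · rw [List.mem_cons] at h
      have hm : m ∈ t := h.resolve_left (fun he => ha he.symm)
      rw [List.takeWhile_cons_of_pos (by simpa using ha),
        List.dropWhile_cons_of_pos (by simpa using ha), List.cons_append, ih hm]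

lemma not_mem_takeWhile_ne (m : ℕ) (l : List ℕ) : m ∉ l.takeWhile (· ≠ m) := by
  intro h
  have := List.mem_takeWhile_imp h
  simp at this


/-- The finset of 132-avoiding permutations (as lists) of a finset. -/
noncomputable def plS (S : Finset ℕ) : Finset (List ℕ) := S.toList.permutations.toFinset.filter Avoids

lemma mem_plS {S : Finset ℕ} {l : List ℕ} :
    l ∈ plS S ↔ (l.Nodup ∧ l.toFinset = S) ∧ Avoids l := by
  rw [plS, Finset.mem_filter, List.mem_toFinset, List.mem_permutations, and_congr_left_iff]
  intro _
  constructor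
  · intro h
    refine ⟨h.symm.nodup (S.nodup_toList), ?_⟩
    ext a
    rw [List.mem_toFinset, h.mem_iff, Finset.mem_toList]
  · rintro ⟨h1, h2⟩
    rw [List.perm_ext_iff_of_nodup h1 S.nodup_toList]
    intro a
    rw [Finset.mem_toList, ← h2, List.mem_toFinset]

/-- Upper subsets of a finset of naturals. -/
def uppers (S : Finset ℕ) : Finset (Finset ℕ) :=
  S.powerset.filter (fun T => ∀ x ∈ T, ∀ y ∈ S \ T, y < x)

lemma uppers_injOn {S : Finset ℕ} : Set.InjOn Finset.card ((uppers S : Finset (Finset ℕ)) : Set (Finset ℕ)) := by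
  intro T₁ h₁ T₂ h₂ hc
  simp only [uppers, Finset.coe_filter, Set.mem_setOf_eq, Finset.mem_powerset] at h₁ h₂
  by_contra hne
  have h12 : ¬ T₁ ⊆ T₂ := fun hs => hne (Finset.eq_of_subset_of_card_le hs hc.ge)
  have h21 : ¬ T₂ ⊆ T₁ := fun hs => hne (Finset.eq_of_subset_of_card_le hs hc.le).symm
  obtain ⟨x, hx1, hx2⟩ := Finset.not_subset.1 h12
  obtain ⟨y, hy2, hy1⟩ := Finset.not_subset.1 h21
  have hxy : x < y := h₂.2 y hy2 x (Finset.mem_sdiff.2 ⟨h₁.1 hx1, hx2⟩)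
  have hyx : y < x := h₁.2 x hx1 y (Finset.mem_sdiff.2 ⟨h₂.1 hy2, hy1⟩)
  omega

lemma uppers_surjOn {S : Finset ℕ} {k : ℕ} (hk : k ≤ S.card) :
    ∃ T ∈ uppers S, T.card = k := by
  induction k with
  | zero =>
    exact ⟨∅, by simp [uppers], rfl⟩
  | succ k ih =>
    obtain ⟨T, hT, hTc⟩ := ih (le_of_lt (Nat.lt_of_lt_of_le (Nat.lt_succ_self k) hk))
    simp only [uppers, Finset.mem_filter, Finset.mem_powerset] at hT
    have hne : (S \ T).Nonempty := by
      rw [← Finset.card_pos, Finset.card_sdiff_of_subset hT.1]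
      omega
    set y := (S \ T).max' hne with hy
    have hyS : y ∈ S \ T := (S \ T).max'_mem hne
    rw [Finset.mem_sdiff] at hyS
    refine ⟨insert y T, ?_, ?_⟩
    · simp only [uppers, Finset.mem_filter, Finset.mem_powerset]
      refine ⟨Finset.insert_subset hyS.1 hT.1, ?_⟩
      intro x hx z hz
      rw [Finset.mem_sdiff, Finset.mem_insert, not_or] at hz
      rw [Finset.mem_insert] at hx
      rcases hx with rfl | hx
      · exact lt_of_le_of_ne (Finset.le_max' _ _ (Finset.mem_sdiff.2 ⟨hz.1, hz.2.2⟩)) hz.2.1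
      · exact hT.2 x hx z (Finset.mem_sdiff.2 ⟨hz.1, hz.2.2⟩)
    · rw [Finset.card_insert_of_notMem hyS.2, hTc]

lemma uppers_mapsTo {S : Finset ℕ} {T : Finset ℕ} (h : T ∈ uppers S) : T.card ≤ S.card :=
  Finset.card_le_card (Finset.mem_powerset.1 (Finset.mem_filter.1 h).1)
lemma cross_of_avoids {m : ℕ} {l₁ l₂ : List ℕ} (h : Avoids (l₁ ++ m :: l₂))
    {x y : ℕ} (hx : x ∈ l₁) (hy : y ∈ l₂) (hym : y < m) (hxy : x ≠ y) : y < x := by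
  rcases lt_or_gt_of_ne hxy with hlt | h'
  · exfalso
    have hs : [x, m, y] <+ l₁ ++ m :: l₂ :=
      List.Sublist.append (List.singleton_sublist.2 hx)
        (List.Sublist.cons₂ m (List.singleton_sublist.2 hy))
    exact (avoids_iff _).1 h x m y hs ⟨hlt, hym⟩
  · exact h'

lemma avoids_glue {m : ℕ} {l₁ l₂ : List ℕ}
    (h₁ : Avoids l₁) (h₂ : Avoids l₂)
    (hm₁ : ∀ x ∈ l₁, x < m) (hm₂ : ∀ x ∈ l₂, x < m)
    (hcross : ∀ x ∈ l₁, ∀ y ∈ l₂, y < x) :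
    Avoids (l₁ ++ m :: l₂) := by
  rw [avoids_iff] at h₁ h₂ ⊢
  rintro x y z hs ⟨hxz, hzy⟩
  rw [List.sublist_append_iff] at hs
  obtain ⟨p₁, p₂, hp, hs₁, hs₂⟩ := hs
  rw [List.sublist_cons_iff] at hs₂
  rcases p₁ with _ | ⟨a, _ | ⟨b, _ | ⟨c, p⟩⟩⟩
  · rw [List.nil_append] at hp
    subst hp
    rcases hs₂ with h2 | ⟨r, hr, hrs⟩
    · exact h₂ x y z h2 ⟨hxz, hzy⟩
    · simp only [List.cons.injEq] at hr
      obtain ⟨hxm, hr⟩ := hr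
      subst hxm
      subst hr
      have hz : z ∈ l₂ := hrs.subset (by simp)
      have := hm₂ z hz
      omega
  · simp only [List.cons_append, List.nil_append, List.cons.injEq] at hp
    obtain ⟨ha, hp⟩ := hp
    subst ha
    subst hp
    have hx : x ∈ l₁ := hs₁.subset (by simp)
    rcases hs₂ with h2 | ⟨r, hr, hrs⟩
    · have hz : z ∈ l₂ := h2.subset (by simp)
      have := hcross x hx z hz
      omega
    · simp only [List.cons.injEq] at hr
      obtain ⟨hym, hr⟩ := hr
      subst hr
      have hz : z ∈ l₂ := hrs.subset (by simp)
      have := hcross x hx z hz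
      omega
  · simp only [List.cons_append, List.nil_append, List.cons.injEq] at hp
    obtain ⟨ha, hb, hp⟩ := hp
    subst ha
    subst hb
    subst hp
    have hyl : y ∈ l₁ := hs₁.subset (by simp)
    rcases hs₂ with h2 | ⟨r, hr, hrs⟩
    · have hz : z ∈ l₂ := h2.subset (by simp)
      have hx : x ∈ l₁ := hs₁.subset (by simp)
      have := hcross x hx z hz
      omega
    · simp only [List.cons.injEq] at hr
      obtain ⟨hzm, -⟩ := hr
      subst hzm
      have := hm₁ y hyl
      omega
  · simp only [List.cons_append, List.cons.injEq] at hp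
    obtain ⟨ha, hb, hc, hp⟩ := hp
    subst ha
    subst hb
    subst hc
    rw [eq_comm, List.append_eq_nil_iff] at hp
    obtain ⟨rfl, rfl⟩ := hp
    exact h₁ x y z hs₁ ⟨hxz, hzy⟩
lemma avoids_ofFn_iff {n : ℕ} (f : Fin n → ℕ) :
    Avoids (List.ofFn f) ↔ ∀ a b c : Fin n, a < b → b < c → ¬(f a < f c ∧ f c < f b) := by
  rw [avoids_iff]
  constructor
  · intro h a b c hab hbc
    refine h (f a) (f b) (f c) ?_
    rw [List.ofFn_eq_map]
    have hmap : [f a, f b, f c] = List.map f [a, b, c] := rfl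
    rw [hmap]
    refine List.Sublist.map f ?_
    haveI : IsAntisymm (Fin n) (· ≤ ·) := ⟨fun _ _ h1 h2 => le_antisymm h1 h2⟩
    refine List.sublist_of_subperm_of_pairwise (r := (· ≤ ·))
      (List.subperm_of_subset ?_ ?_) ?_ ?_
    · have h1 : a ≠ b := hab.ne
      have h2 : a ≠ c := (hab.trans hbc).ne
      have h3 : b ≠ c := hbc.ne
      simp [List.nodup_cons, h1, h2, h3]
    · intro u hu
      exact List.mem_finRange u
    · refine List.Pairwise.cons ?_ (List.Pairwise.cons ?_ ?_)
      · intro u hu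
        rcases List.mem_cons.1 hu with rfl | hu
        · exact hab.le
        · rcases List.mem_singleton.1 hu with rfl
          exact (hab.trans hbc).le
      · intro u hu
        rcases List.mem_singleton.1 hu with rfl
        exact hbc.le
      · exact List.pairwise_singleton _ _
    · exact (List.pairwise_lt_finRange n).imp le_of_lt
  · intro h x y z hs hp
    rw [List.sublist_iff_exists_fin_orderEmbedding_get_eq] at hs
    obtain ⟨emb, hemb⟩ := hs
    have hlen : (List.ofFn f).length = n := List.length_ofFn
    set a := Fin.cast hlen (emb ⟨0, by simp⟩)
    set b := Fin.cast hlen (emb ⟨1, by simp⟩)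
    set c := Fin.cast hlen (emb ⟨2, by simp⟩)
    have hab : a < b := by
      simp only [a, b, Fin.lt_def, Fin.coe_cast]
      exact emb.strictMono (by simp [Fin.lt_def])
    have hbc : b < c := by
      simp only [b, c, Fin.lt_def, Fin.coe_cast]
      exact emb.strictMono (by simp [Fin.lt_def])
    have ha : f a = x := by
      have := hemb ⟨0, by simp⟩
      simpa [List.get_ofFn, a, Fin.cast] using this.symm
    have hb : f b = y := by
      have := hemb ⟨1, by simp⟩
      simpa [List.get_ofFn, b, Fin.cast] using this.symm
    have hc : f c = z := by
      have := hemb ⟨2, by simp⟩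
      simpa [List.get_ofFn, c, Fin.cast] using this.symm
    exact h a b c hab hbc (by rw [ha, hb, hc]; exact hp)

lemma avoids_nil : Avoids [] := by
  intro p hp
  simp only [List.sublists_nil, List.mem_singleton] at hp
  subst hp
  rfl

lemma plS_card : ∀ n : ℕ, ∀ S : Finset ℕ, S.card = n → (plS S).card = catalan n := by
  intro n
  induction n using Nat.strong_induction_on with
  | _ n ih =>
    intro S hS
    match n, hS with
    | 0, hS =>
      rw [Finset.card_eq_zero] at hS
      subst hS
      rw [catalan_zero, Finset.card_eq_one]
      refine ⟨[], ?_⟩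
      ext l
      simp only [mem_plS, Finset.mem_singleton]
      constructor
      · rintro ⟨⟨-, h2⟩, -⟩
        simpa using h2
      · rintro rfl
        exact ⟨⟨List.nodup_nil, by simp⟩, avoids_nil⟩
    | (k+1), hS =>
      have hSne : S.Nonempty := Finset.card_pos.1 (by omega)
      set m := S.max' hSne with hm
      have hmS : m ∈ S := S.max'_mem hSne
      set S' := S.erase m with hS'
      have hS'c : S'.card = k := by
        rw [hS', Finset.card_erase_of_mem hmS, hS]
        omega
      have hS'lt : ∀ x ∈ S', x < m :=
        fun x hx => lt_of_le_of_ne (S.le_max' x (Finset.mem_of_mem_erase hx))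
          (Finset.ne_of_mem_erase hx)
      have hS'sub : S' ⊆ S := Finset.erase_subset m S
      have hmS' : m ∉ S' := Finset.notMem_erase m S
      -- the bijection
      have key : (plS S).card =
          ((uppers S').sigma (fun T => (plS T) ×ˢ (plS (S' \ T)))).card := by
        refine (Finset.card_bij'
          (i := fun l _ => (⟨(l.takeWhile (· ≠ m)).toFinset,
            (l.takeWhile (· ≠ m), (l.dropWhile (· ≠ m)).tail)⟩ :
            (T : Finset ℕ) × (List ℕ × List ℕ)))
          (j := fun x _ => x.2.1 ++ m :: x.2.2) ?_ ?_ ?_ ?_)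
        · -- forward membership
          intro l hl
          rw [mem_plS] at hl
          obtain ⟨⟨hnd, hTF⟩, hav⟩ := hl
          have hml : m ∈ l := by rw [← List.mem_toFinset, hTF]; exact hmS
          set l₁ := l.takeWhile (· ≠ m) with hl₁
          set l₂ := (l.dropWhile (· ≠ m)).tail with hl₂
          have hsplit : l₁ ++ m :: l₂ = l := split_at_mem l hml
          have hml₁ : m ∉ l₁ := not_mem_takeWhile_ne m l
          have hnds : (l₁ ++ m :: l₂).Nodup := by rw [hsplit]; exact hnd
          have hdisj : List.Disjoint l₁ (m :: l₂) := List.disjoint_of_nodup_append hnds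
          have hnd1 : l₁.Nodup := (List.nodup_append.1 hnds).1
          have hnd2' : (m :: l₂).Nodup := (List.nodup_append.1 hnds).2.1
          have hnd2 : l₂.Nodup := (List.nodup_cons.1 hnd2').2
          have hml₂ : m ∉ l₂ := (List.nodup_cons.1 hnd2').1
          have hmem : ∀ x, x ∈ l ↔ x ∈ l₁ ∨ x = m ∨ x ∈ l₂ := by
            intro x
            rw [← hsplit]
            simp [List.mem_append, List.mem_cons]
          have hmemS : ∀ x ∈ l, x ∈ S := by
            intro x hx
            rw [← hTF, List.mem_toFinset]
            exact hx
          have hsub1 : ∀ x ∈ l₁, x ∈ S' := by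
            intro x hx
            refine Finset.mem_erase.2 ⟨fun he => hml₁ (he ▸ hx), hmemS x ((hmem x).2 (Or.inl hx))⟩
          have hsub2 : ∀ x ∈ l₂, x ∈ S' := by
            intro x hx
            refine Finset.mem_erase.2 ⟨fun he => hml₂ (he ▸ hx), hmemS x ((hmem x).2 (Or.inr (Or.inr hx)))⟩
          have hcross : ∀ x ∈ l₁, ∀ y ∈ l₂, y < x := by
            intro x hx y hy
            have hav' : Avoids (l₁ ++ m :: l₂) := by rw [hsplit]; exact hav
            refine cross_of_avoids hav' hx hy (hS'lt y (hsub2 y hy)) ?_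
            intro he
            exact hdisj hx (by rw [he]; exact List.mem_cons_of_mem m hy)
          have hT : l₁.toFinset ∈ uppers S' := by
            rw [uppers, Finset.mem_filter, Finset.mem_powerset]
            constructor
            · intro x hx
              exact hsub1 x (List.mem_toFinset.1 hx)
            · intro x hx y hy
              rw [List.mem_toFinset] at hx
              rw [Finset.mem_sdiff] at hy
              have hyl : y ∈ l := by
                rw [← List.mem_toFinset, hTF]
                exact hS'sub hy.1
              have hy2 : y ∈ l₂ := by
                rcases (hmem y).1 hyl with h | h | h
                · exact absurd (List.mem_toFinset.2 h) hy.2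
                · exact absurd (h ▸ hy.1) (by rw [← h] at hmS' ⊢; exact hmS')
                · exact h
              exact hcross x hx y hy2
          simp only [Finset.mem_sigma, Finset.mem_product]
          refine ⟨hT, ?_, ?_⟩
          · rw [mem_plS]
            have hsl : l₁ ++ m :: l₂ <+ l := by rw [hsplit]
            exact ⟨⟨hnd1, rfl⟩, hav.sublist ((List.sublist_append_left _ _).trans hsl)⟩
          · rw [mem_plS]
            have hsl : l₁ ++ m :: l₂ <+ l := by rw [hsplit]
            refine ⟨⟨hnd2, ?_⟩, hav.sublist
              (((List.sublist_cons_self m l₂).trans (List.sublist_append_right _ _)).trans hsl)⟩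
            ext a
            rw [List.mem_toFinset, Finset.mem_sdiff, List.mem_toFinset]
            constructor
            · intro ha
              refine ⟨hsub2 a ha, fun hal => hdisj hal (List.mem_cons_of_mem m ha)⟩
            · rintro ⟨ha1, ha2⟩
              have hal : a ∈ l := by
                rw [← List.mem_toFinset, hTF]
                exact hS'sub ha1
              rcases (hmem a).1 hal with h | h | h
              · exact absurd h ha2
              · exact absurd (h ▸ ha1) (by rw [← h] at hmS' ⊢; exact hmS')
              · exact h
        · -- backward membership
          rintro ⟨T, l₁, l₂⟩ hx
          rw [Finset.mem_sigma, Finset.mem_product] at hx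
          dsimp only at hx ⊢
          obtain ⟨hT, h1, h2⟩ := hx
          rw [mem_plS] at h1 h2
          obtain ⟨⟨hnd1, hTF1⟩, hav1⟩ := h1
          obtain ⟨⟨hnd2, hTF2⟩, hav2⟩ := h2
          rw [uppers, Finset.mem_filter, Finset.mem_powerset] at hT
          obtain ⟨hTsub, hTup⟩ := hT
          have hsub1 : ∀ x ∈ l₁, x ∈ S' := fun x hx => hTsub (by rw [← hTF1]; exact List.mem_toFinset.2 hx)
          have hsub2 : ∀ x ∈ l₂, x ∈ S' ∧ x ∉ T := by
            intro x hx
            have := List.mem_toFinset.2 hx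
            rw [hTF2, Finset.mem_sdiff] at this
            exact this
          rw [mem_plS]
          refine ⟨⟨?_, ?_⟩, ?_⟩
          · refine List.Nodup.append hnd1 ?_ ?_
            · exact List.nodup_cons.2 ⟨fun h => hmS' ((hsub2 m h).1), hnd2⟩
            · intro a ha hac
              rcases List.mem_cons.1 hac with rfl | h
              · exact hmS' (hsub1 _ ha)
              · have h1 := hsub1 a ha
                have h2 := hsub2 a h
                exact h2.2 (by rw [← hTF1]; exact List.mem_toFinset.2 ha)
          · ext a
            rw [List.toFinset_append, List.toFinset_cons, Finset.mem_union, Finset.mem_insert,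
              hTF1, hTF2]
            constructor
            · rintro (h | rfl | h)
              · exact hS'sub (hTsub h)
              · exact hmS
              · exact hS'sub (Finset.mem_sdiff.1 h).1
            · intro ha
              by_cases ham : a = m
              · exact Or.inr (Or.inl ham)
              · have ha' : a ∈ S' := Finset.mem_erase.2 ⟨ham, ha⟩
                by_cases hat : a ∈ T
                · exact Or.inl hat
                · exact Or.inr (Or.inr (Finset.mem_sdiff.2 ⟨ha', hat⟩))
          · refine avoids_glue hav1 hav2 ?_ ?_ ?_
            · exact fun x hx => hS'lt x (hsub1 x hx)
            · exact fun x hx => hS'lt x ((hsub2 x hx).1)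
            · intro x hx y hy
              exact hTup x (by rw [← hTF1]; exact List.mem_toFinset.2 hx) y
                (by rw [← hTF2] at *; exact List.mem_toFinset.2 hy)
        · -- left inverse
          intro l hl
          rw [mem_plS] at hl
          obtain ⟨⟨hnd, hTF⟩, hav⟩ := hl
          have hml : m ∈ l := by rw [← List.mem_toFinset, hTF]; exact hmS
          exact split_at_mem l hml
        · -- right inverse
          rintro ⟨T, l₁, l₂⟩ hx
          rw [Finset.mem_sigma, Finset.mem_product] at hx
          dsimp only at hx ⊢
          obtain ⟨hT, h1, h2⟩ := hx
          rw [mem_plS] at h1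
          obtain ⟨⟨hnd1, hTF1⟩, -⟩ := h1
          rw [uppers, Finset.mem_filter, Finset.mem_powerset] at hT
          have hml₁ : m ∉ l₁ := by
            intro h
            exact hmS' (hT.1 (by rw [← hTF1]; exact List.mem_toFinset.2 h))
          simp only [takeWhile_ne_append l₁ l₂ hml₁, dropWhile_ne_append l₁ l₂ hml₁,
            List.tail_cons, hTF1]
      rw [key, Finset.card_sigma]
      have hterm : ∀ T ∈ uppers S',
          ((plS T) ×ˢ (plS (S' \ T))).card = catalan T.card * catalan (k - T.card) := by
        intro T hT
        rw [uppers, Finset.mem_filter, Finset.mem_powerset] at hT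
        have hTk : T.card ≤ k := hS'c ▸ Finset.card_le_card hT.1
        rw [Finset.card_product]
        rw [ih T.card (by omega) T rfl,
          ih (k - T.card) (by omega) (S' \ T) (by rw [Finset.card_sdiff_of_subset hT.1, hS'c])]
      rw [Finset.sum_congr rfl hterm]
      have hsum : ∑ T ∈ uppers S', catalan T.card * catalan (k - T.card) =
          ∑ i ∈ Finset.range (k + 1), catalan i * catalan (k - i) := by
        refine Finset.sum_nbij (i := Finset.card) ?_ ?_ ?_ ?_
        · intro T hT
          rw [Finset.mem_range]
          have := uppers_mapsTo hT
          omega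
        · exact uppers_injOn
        · intro i hi
          rw [Finset.mem_coe, Finset.mem_range] at hi
          obtain ⟨T, hT, hTc⟩ := uppers_surjOn (S := S') (k := i) (by omega)
          exact ⟨T, hT, hTc⟩
        · intro T hT
          rfl
      rw [hsum, catalan_succ k]
      rw [← Fin.sum_univ_eq_sum_range]

/-- For every n ≥ 1, the number of 132-avoiding permutations of {1,…,n} equals the n-th
Catalan number Cₙ = binomial(2n, n)/(n+1). -/
theorem stmt9 (n : ℕ) (hn : 1 ≤ n) :
    (Finset.univ.filter (fun π : Equiv.Perm (Fin n) =>
      ∀ a b c : Fin n, a < b → b < c → ¬(π a < π c ∧ π c < π b))).card = catalan n ∧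
    (n + 1) * catalan n = Nat.choose (2 * n) n := by
  constructor
  · have hcard : (Finset.univ.filter (fun π : Equiv.Perm (Fin n) =>
        ∀ a b c : Fin n, a < b → b < c → ¬(π a < π c ∧ π c < π b))).card =
        (plS (Finset.range n)).card := by
      refine Finset.card_bij (i := fun π _ => List.ofFn (fun i => (π i : ℕ))) ?_ ?_ ?_
      · intro π hπ
        rw [Finset.mem_filter] at hπ
        rw [mem_plS]
        refine ⟨⟨?_, ?_⟩, ?_⟩
        · exact List.nodup_ofFn.2 (Fin.val_injective.comp π.injective)
        · ext a
          rw [List.mem_toFinset, List.mem_ofFn, Finset.mem_range]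
          constructor
          · rintro ⟨i, rfl⟩
            exact (π i).isLt
          · intro ha
            exact ⟨π.symm ⟨a, ha⟩, by simp⟩
        · rw [avoids_ofFn_iff]
          intro a b c hab hbc h
          exact hπ.2 a b c hab hbc ⟨h.1, h.2⟩
      · intro π hπ π' hπ' he
        apply Equiv.ext
        intro i
        have := List.ofFn_inj.1 he
        exact Fin.val_injective (congrFun this i)
      · intro l hl
        rw [mem_plS] at hl
        obtain ⟨⟨hnd, hTF⟩, hav⟩ := hl
        have hlen : l.length = n := by
          rw [← List.toFinset_card_of_nodup hnd, hTF, Finset.card_range]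
        have hmemlt : ∀ i : Fin l.length, l.get i < n := by
          intro i
          have : l.get i ∈ l.toFinset := List.mem_toFinset.2 (l.get_mem i)
          rw [hTF, Finset.mem_range] at this
          exact this
        set f : Fin n → Fin n := fun i => ⟨l.get (Fin.cast hlen.symm i), hmemlt _⟩ with hf
        have hinj : Function.Injective f := by
          intro i j hij
          have h1 : l.get (Fin.cast hlen.symm i) = l.get (Fin.cast hlen.symm j) :=
            congrArg Fin.val hij
          have h2 := (hnd.get_inj_iff).1 h1
          simpa [Fin.ext_iff] using h2
        set π : Equiv.Perm (Fin n) := Equiv.ofBijective f (Finite.injective_iff_bijective.1 hinj)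
          with hπ
        have hofn : List.ofFn (fun i => (π i : ℕ)) = l := by
          have : (fun i : Fin n => (π i : ℕ)) = fun i : Fin n => l.get (Fin.cast hlen.symm i) := by
            funext i
            rfl
          rw [this]
          refine List.ext_get (by simp [hlen]) ?_
          intro i h1 h2
          rw [List.get_ofFn]
          rfl
        refine ⟨π, ?_, hofn⟩
        rw [Finset.mem_filter]
        refine ⟨Finset.mem_univ _, ?_⟩
        intro a b c hab hbc hcon
        have hA : Avoids (List.ofFn (fun i => (π i : ℕ))) := by rw [hofn]; exact hav
        rw [avoids_ofFn_iff] at hA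
        exact hA a b c hab hbc ⟨hcon.1, hcon.2⟩
    rw [hcard, plS_card n (Finset.range n) (Finset.card_range n)]
  · rw [succ_mul_catalan_eq_centralBinom]
    exact Nat.centralBinom_eq_two_mul_choose n
end
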